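/- arXiv:1810.01038 — 18 statements merged into one kernel-verified Lean document; each statement's English description precedes it below -/
import Mathlib

section
/- Let q be a prime number, let l ≥ 1 be an integer, and let α be a nonzero rational number whose numerator α₁ = α.num is coprime to q (gcd(α₁, q) = 1). Writing α₂ = α.den, we have: α ∈ ℚ-KS(qˡ) if and only if the integer α₂·q − α₁ divides q^{l−1} − 1. -/
/-- `α` is an `N`-Korselt base: `α ≠ 0`, `α ≠ N`, and for every prime `p` dividing `N`,
`α.den * p - α.num` divides `α.den * N - α.num`. -/
def QKS (N : ℕ) (α : ℚ) : Prop :=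
  α ≠ 0 ∧ α ≠ (N : ℚ) ∧
    ∀ p : ℕ, p.Prime → p ∣ N →
      ((α.den : ℤ) * p - α.num) ∣ ((α.den : ℤ) * N - α.num)

theorem stmt_0 (q : ℕ) (hq : q.Prime) (l : ℕ) (hl : 1 ≤ l) (α : ℚ) (hα : α ≠ 0)
    (hcop : Int.gcd α.num (q : ℤ) = 1) :
    QKS (q ^ l) α ↔ ((α.den : ℤ) * q - α.num) ∣ ((q : ℤ) ^ (l - 1) - 1) := by
  obtain ⟨m, rfl⟩ : ∃ m, l = m + 1 := ⟨l - 1, (Nat.succ_pred_eq_of_pos hl).symm⟩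
  simp only [Nat.add_sub_cancel]
  set d : ℤ := (α.den : ℤ) * q - α.num with hd
  -- coprimality of d and α.num
  have h1 : IsCoprime (α.num) ((α.den : ℤ)) := by
    rw [Int.isCoprime_iff_gcd_eq_one]
    exact α.reduced
  have h2 : IsCoprime α.num ((q : ℤ)) := Int.isCoprime_iff_gcd_eq_one.mpr hcop
  have h3 : IsCoprime ((α.den : ℤ) * q) α.num := (h1.mul_right h2).symm
  have hcopd : IsCoprime d α.num := by
    have := h3.add_mul_left_left (-1)
    have heq : (α.den : ℤ) * q + α.num * (-1) = d := by ring
    rwa [heq] at this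
  -- key identity
  have key : (α.den : ℤ) * (q : ℤ) ^ (m + 1) - α.num
      = (q : ℤ) ^ m * d + α.num * ((q : ℤ) ^ m - 1) := by
    rw [hd]; ring
  constructor
  · intro h
    have hdvd := h.2.2 q hq (dvd_pow_self q (by omega))
    push_cast at hdvd
    rw [key] at hdvd
    have : d ∣ α.num * ((q : ℤ) ^ m - 1) := (dvd_add_right ⟨(q : ℤ) ^ m, mul_comm _ _⟩).mp hdvd
    exact hcopd.dvd_of_dvd_mul_left this
  · intro h
    refine ⟨hα, ?_, ?_⟩
    · intro hne
      have hnum : α.num = ((q : ℤ)) ^ (m + 1) := by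
        rw [hne]; push_cast; simp
      have hq1 : q ∣ Int.gcd α.num (q : ℤ) := by
        refine Nat.dvd_gcd ?_ ?_
        · have : (q : ℤ) ∣ α.num := hnum ▸ dvd_pow_self _ (Nat.succ_ne_zero m)
          simpa [Int.natAbs_dvd_natAbs] using Int.natAbs_dvd_natAbs.mpr this
        · simp
      rw [hcop] at hq1
      exact hq.one_lt.ne' (Nat.dvd_one.mp hq1)
    · intro p hp hpd
      have hpq : p = q := (Nat.prime_dvd_prime_iff_eq hp hq).mp (hp.dvd_of_dvd_pow hpd)
      subst hpq
      push_cast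
      rw [key]
      exact dvd_add (Dvd.intro_left _ rfl) (Dvd.dvd.mul_left h _)
end

section
/- Let q be a prime number, let l ≥ 2 be an integer, and let α be a rational number with α ≠ 0, α ≠ qˡ, whose numerator is divisible by q; write α.num = q·α₁′ and α₂ = α.den. Then α ∈ ℚ-KS(qˡ) if and only if the integer α₂ − α₁′ divides q^{l−1} − 1. -/
theorem stmt_1 (q : ℕ) (hq : q.Prime) (l : ℕ) (hl : 2 ≤ l) (α : ℚ) (hα0 : α ≠ 0)
    (hαN : α ≠ (q : ℚ) ^ l) (hdvd : (q : ℤ) ∣ α.num) :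
    QKS (q ^ l) α ↔ ((α.den : ℤ) - α.num / (q : ℤ)) ∣ ((q : ℤ) ^ (l - 1) - 1) := by
  obtain ⟨a, ha⟩ := hdvd
  have hq0 : (q : ℤ) ≠ 0 := by exact_mod_cast hq.pos.ne'
  have hdivq : α.num / (q : ℤ) = a := by rw [ha]; exact Int.mul_ediv_cancel_left a hq0
  rw [hdivq]
  set d : ℤ := (α.den : ℤ) with hd
  -- coprimality of d - a and d
  have hcopnum : IsCoprime α.num d := by
    rw [Int.isCoprime_iff_gcd_eq_one]
    exact α.reduced
  have hcopa : IsCoprime a d :=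
    hcopnum.of_isCoprime_of_dvd_left ⟨(q : ℤ), by rw [ha]; ring⟩
  have hcop : IsCoprime (d - a) d := by
    have := (hcopa.neg_left).add_mul_left_left 1
    simpa [sub_eq_neg_add, mul_one] using this
  have hl1 : l = (l - 1) + 1 := by omega
  have hNsplit : (d * (q : ℤ) ^ l - α.num) = (q : ℤ) * (d * (q : ℤ) ^ (l - 1) - a) := by
    rw [ha]; nth_rewrite 1 [hl1]; ring
  have hqsplit : (d * (q : ℤ) - α.num) = (q : ℤ) * (d - a) := by rw [ha]; ring
  have key : (d - a) ∣ (d * (q : ℤ) ^ (l - 1) - a) ↔ (d - a) ∣ ((q : ℤ) ^ (l - 1) - 1) := by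
    have heq : d * (q : ℤ) ^ (l - 1) - a = d * ((q : ℤ) ^ (l - 1) - 1) + (d - a) := by ring
    rw [heq]
    constructor
    · intro h
      have h2 : (d - a) ∣ d * ((q : ℤ) ^ (l - 1) - 1) := (dvd_add_left dvd_rfl).mp h
      exact hcop.dvd_of_dvd_mul_left h2
    · intro h
      exact dvd_add (Dvd.dvd.mul_left h d) dvd_rfl
  constructor
  · rintro ⟨-, -, h⟩
    have h1 := h q hq (dvd_pow_self q (by omega))
    push_cast at h1
    rw [hNsplit, hqsplit] at h1
    exact key.mp ((mul_dvd_mul_iff_left hq0).mp h1)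
  · intro h
    refine ⟨hα0, by push_cast; exact hαN, ?_⟩
    intro p hp hpd
    have hpq : p = q := (Nat.prime_dvd_prime_iff_eq hp hq).mp (hp.dvd_of_dvd_pow hpd)
    subst hpq
    push_cast
    rw [hNsplit, hqsplit]
    exact mul_dvd_mul_left _ (key.mpr h)
end

section
/- Let q be a prime number, let l ≥ 2 be an integer, and let α ∈ ℚ-KS(qˡ) be such that q divides α.num. Then the rational number α′ = α/q satisfies 2 − q^{l−1} ≤ α′ ≤ (q^{l−1} + 1)/2. -/
theorem stmt_2 (q : ℕ) (hq : q.Prime) (l : ℕ) (hl : 2 ≤ l) (α : ℚ)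
    (hα : QKS (q ^ l) α) (hdvd : (q : ℤ) ∣ α.num) :
    2 - (q : ℚ) ^ (l - 1) ≤ α / q ∧ α / q ≤ ((q : ℚ) ^ (l - 1) + 1) / 2 := by
  obtain ⟨hα0, hαN, hdv⟩ := hα
  obtain ⟨a', ha⟩ := hdvd
  set a : ℤ := α.num with ha_def
  set b : ℤ := (α.den : ℤ) with hb_def
  have hb : 0 < b := by rw [hb_def]; exact_mod_cast α.pos
  have hq2 : 2 ≤ (q : ℤ) := by exact_mod_cast hq.two_le
  have hq0 : (q : ℤ) ≠ 0 := by positivity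
  set Q : ℤ := (q : ℤ) ^ (l - 1) with hQ_def
  have hQ2 : 2 ≤ Q := by
    calc (2:ℤ) = 2^1 := by ring
    _ ≤ (q:ℤ)^1 := pow_le_pow_left₀ (by norm_num) hq2 1
    _ ≤ (q:ℤ)^(l-1) := pow_le_pow_right₀ (by linarith) (by omega)
  have hql : ((q : ℤ))^l = q * Q := by
    rw [hQ_def, ← pow_succ']
    congr 1
    omega
  have h1 : (b * q - a) ∣ (b * ((q^l : ℕ) : ℤ) - a) :=
    hdv q hq (dvd_pow_self q (by omega))
  have h1' : ((q:ℤ)) * (b - a') ∣ (q:ℤ) * (b * Q - a') := by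
    have e1 : (q:ℤ) * (b - a') = b * q - a := by rw [ha]; ring
    have e2 : (q:ℤ) * (b * Q - a') = b * ((q^l : ℕ) : ℤ) - a := by
      push_cast
      rw [ha, hql]; ring
    rw [e1, e2]; exact h1
  have h2 : (b - a') ∣ (b * Q - a') := (mul_dvd_mul_iff_left hq0).mp h1'
  have h3 : (b - a') ∣ a' * (Q - 1) := by
    have h := dvd_sub h2 (Dvd.dvd.mul_right (dvd_refl (b - a')) Q)
    have e : a' * (Q - 1) = b * Q - a' - (b - a') * Q := by ring
    rw [e]; exact h
  have hcop : IsCoprime (b - a') a' := by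
    have hab : IsCoprime a b := Int.isCoprime_iff_gcd_eq_one.mpr α.reduced
    have ha'b : IsCoprime b a' := by
      have hd' : a' ∣ a := ⟨q, by rw [ha]; ring⟩
      exact (hab.symm).of_isCoprime_of_dvd_right hd'
    have heq : b - a' = b + a' * (-1) := by ring
    rw [heq]
    exact ha'b.add_mul_left_left (-1)
  have hdQ : (b - a') ∣ (Q - 1) := hcop.dvd_of_dvd_mul_left h3
  set d : ℤ := b - a' with hd_def
  have ha' : a' = b - d := by rw [hd_def]; ring
  have hle1 : d ≤ Q - 1 := Int.le_of_dvd (by omega) hdQ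
  have hle2 : -d ≤ Q - 1 := Int.le_of_dvd (by omega) ((neg_dvd).mpr hdQ)
  -- rewrite α / q as a' / b
  have hbQ : (0:ℚ) < (b : ℚ) := by exact_mod_cast hb
  have hqQ : (0:ℚ) < (q : ℚ) := by exact_mod_cast hq.pos
  have hcast : (q : ℚ) ^ (l - 1) = ((Q : ℤ) : ℚ) := by rw [hQ_def]; push_cast; ring
  have hαq : α / q = (a' : ℚ) / (b : ℚ) := by
    have hα_eq : α = (a : ℚ) / (b : ℚ) := by
      rw [ha_def, hb_def]; exact_mod_cast (Rat.num_div_den α).symm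
    rw [hα_eq, ha]
    push_cast
    field_simp
  rw [hαq, hcast]
  constructor
  · rw [le_div_iff₀ hbQ]
    have hint : (2 - Q) * b ≤ a' := by nlinarith
    calc (2 - ((Q:ℤ):ℚ)) * (b:ℚ) = (((2 - Q) * b : ℤ) : ℚ) := by push_cast; ring
      _ ≤ ((a' : ℤ) : ℚ) := by exact_mod_cast hint
  · rw [div_le_div_iff₀ hbQ (by norm_num : (0:ℚ) < 2)]
    have hint : a' * 2 ≤ (Q + 1) * b := by
      rcases le_or_gt 0 d with hd | hd
      · nlinarith
      · rcases le_or_gt 2 b with hb2 | hb2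
        · nlinarith
        · have hb1 : b = 1 := by omega
          rcases eq_or_lt_of_le hle2 with heq | hlt
          · exfalso
            apply hαN
            have haval : a = (q:ℤ)^l := by
              rw [ha, ha', hb1, hql]
              have : d = -(Q - 1) := by omega
              rw [this]; ring
            have hden1 : α.den = 1 := by
              have : (α.den : ℤ) = 1 := by rw [← hb_def, hb1]
              exact_mod_cast this
            have : α = (α.num : ℚ) := by
              conv_lhs => rw [← Rat.num_div_den α]
              rw [hden1]; simp
            rw [this, ← ha_def, haval]
            push_cast
            ring
          · obtain ⟨k, hk⟩ := (neg_dvd).mpr hdQ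
            have hk2 : 2 ≤ k := by nlinarith
            nlinarith
    calc ((a':ℤ):ℚ) * 2 = ((a' * 2 : ℤ) : ℚ) := by push_cast; ring
      _ ≤ (((Q + 1) * b : ℤ) : ℚ) := by exact_mod_cast hint
      _ = (((Q:ℤ):ℚ) + 1) * (b:ℚ) := by push_cast; ring
end

section
/- Let q be a prime number, let l ≥ 2 be an integer, and let α ∈ ℚ-KS(qˡ) be such that gcd(α.num, q) = 1. Then 1 + q − q^{l−1} ≤ α ≤ q^{l−1} + q − 1 (inequalities of rational numbers). -/
theorem stmt_3 (q : ℕ) (hq : q.Prime) (l : ℕ) (hl : 2 ≤ l) (α : ℚ)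
    (hα : QKS (q ^ l) α) (hcop : Int.gcd α.num (q : ℤ) = 1) :
    1 + (q : ℚ) - (q : ℚ) ^ (l - 1) ≤ α ∧ α ≤ (q : ℚ) ^ (l - 1) + q - 1 := by
  obtain ⟨m, rfl⟩ : ∃ m, l = m + 1 := ⟨l - 1, by omega⟩
  simp only [Nat.add_sub_cancel] at *
  have hm : 1 ≤ m := by omega
  obtain ⟨h0, hN, hdvd⟩ := hα
  have hdpos : (0 : ℤ) < (α.den : ℤ) := Int.natCast_pos.mpr α.pos
  have h1 : ((α.den : ℤ) * q - α.num) ∣ ((α.den : ℤ) * (q : ℤ) ^ (m + 1) - α.num) := by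
    have := hdvd q hq (dvd_pow_self q (by omega))
    push_cast at this
    exact this
  have key : ((α.den : ℤ) * q - α.num) ∣ α.num * ((q : ℤ) ^ m - 1) := by
    have h2 : ((α.den : ℤ) * q - α.num) ∣ (q : ℤ) ^ m * ((α.den : ℤ) * q - α.num) :=
      dvd_mul_left _ _
    have h3 : α.num * ((q : ℤ) ^ m - 1) =
        ((α.den : ℤ) * (q : ℤ) ^ (m + 1) - α.num) - (q : ℤ) ^ m * ((α.den : ℤ) * q - α.num) := by
      ring
    rw [h3]; exact dvd_sub h1 h2
  have hqn : IsCoprime (q : ℤ) α.num :=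
    Int.isCoprime_iff_gcd_eq_one.mpr (by rwa [Int.gcd_comm])
  have hdn : IsCoprime (α.den : ℤ) α.num := by
    rw [Int.isCoprime_iff_gcd_eq_one, Int.gcd_comm]
    exact α.reduced
  have hc : IsCoprime ((α.den : ℤ) * q - α.num) α.num := by
    have := (hdn.mul_left hqn).add_mul_right_left (-1)
    have e : (α.den : ℤ) * (q : ℤ) + (-1) * α.num = (α.den : ℤ) * q - α.num := by ring
    rwa [e] at this
  have hdvd2 : ((α.den : ℤ) * q - α.num) ∣ ((q : ℤ) ^ m - 1) :=
    hc.dvd_of_dvd_mul_left key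
  have hq2 : (2 : ℤ) ≤ (q : ℤ) := by exact_mod_cast hq.two_le
  have hpow : (2 : ℤ) ≤ (q : ℤ) ^ m := by
    calc (2 : ℤ) ≤ (q : ℤ) := hq2
    _ ≤ (q : ℤ) ^ m := le_self_pow₀ (by omega) (by omega)
  have hpos : (0 : ℤ) < (q : ℤ) ^ m - 1 := by omega
  have hne : (α.den : ℤ) * q - α.num ≠ 0 := by
    intro h
    have hqd : (q : ℤ) ∣ α.num := ⟨(α.den : ℤ), by linear_combination -h⟩
    have h2 : (q : ℤ) ∣ (Int.gcd α.num (q : ℤ) : ℤ) := Int.dvd_coe_gcd hqd dvd_rfl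
    rw [hcop] at h2
    have := Int.le_of_dvd one_pos h2
    omega
  have habs : |(α.den : ℤ) * q - α.num| ≤ (q : ℤ) ^ m - 1 :=
    Int.le_of_dvd hpos ((abs_dvd _ _).mpr hdvd2)
  rw [abs_le] at habs
  have hlow : (α.den : ℤ) * (1 + (q : ℤ) - (q : ℤ) ^ m) ≤ α.num := by nlinarith [habs.1]
  have hhigh : α.num ≤ (α.den : ℤ) * ((q : ℤ) ^ m + q - 1) := by nlinarith [habs.2]
  have hden : (0 : ℚ) < (α.den : ℚ) := by exact_mod_cast α.pos
  constructor
  · rw [← Rat.num_div_den α, le_div_iff₀ hden]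
    have : ((α.den : ℚ)) * (1 + (q : ℚ) - (q : ℚ) ^ m) ≤ (α.num : ℚ) := by exact_mod_cast hlow
    linarith
  · rw [← Rat.num_div_den α, div_le_iff₀ hden]
    have : (α.num : ℚ) ≤ ((α.den : ℚ)) * ((q : ℚ) ^ m + q - 1) := by exact_mod_cast hhigh
    linarith
end

section
/- Let q be a prime number and let k, l, m be integers with k, l, m ≥ 2 and gcd(l − 1, k − 1) = m − 1. Then for every rational number α with α ∉ {0, q^m, q^l, q^k}, one has: α ∈ ℚ-KS(qˡ) and α ∈ ℚ-KS(q^k) if and only if α ∈ ℚ-KS(q^m). -/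
private lemma gcd_key (q n D : ℤ) : ∀ a b : ℕ, D ∣ n * (q ^ a - 1) → D ∣ n * (q ^ b - 1) →
    D ∣ n * (q ^ Nat.gcd a b - 1) := by
  intro a b
  induction a, b using Nat.gcd.induction with
  | H0 b => intro _ h2; simpa using h2
  | H1 a b ha ih =>
    intro h1 h2
    rw [Nat.gcd_rec]
    refine ih ?_ h1
    have hb : q ^ b = (q ^ a) ^ (b / a) * q ^ (b % a) := by
      rw [← pow_mul, ← pow_add, Nat.div_add_mod]
    have key : n * (q ^ (b % a) - 1) =
        n * (q ^ b - 1) - q ^ (b % a) * (n * ((q ^ a) ^ (b / a) - 1)) := by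
      rw [hb]; ring
    rw [key]
    refine dvd_sub h2 (Dvd.dvd.mul_left ?_ _)
    exact h1.trans (mul_dvd_mul_left n (by simpa using sub_dvd_pow_sub_pow (q ^ a) 1 (b / a)))

private lemma qks_pow_iff (q : ℕ) (hq : q.Prime) (l : ℕ) (hl : 1 ≤ l) (α : ℚ)
    (h0 : α ≠ 0) (hl' : α ≠ (q : ℚ) ^ l) :
    QKS (q ^ l) α ↔ ((α.den : ℤ) * q - α.num) ∣ α.num * ((q : ℤ) ^ (l - 1) - 1) := by
  obtain ⟨l', rfl⟩ : ∃ l', l = l' + 1 := ⟨l - 1, (Nat.succ_pred_eq_of_pos hl).symm⟩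
  have hcast : ((q ^ (l' + 1) : ℕ) : ℚ) = (q : ℚ) ^ (l' + 1) := by push_cast; ring
  have hid : (α.den : ℤ) * (q : ℤ) ^ (l' + 1) - α.num =
      (q : ℤ) ^ l' * ((α.den : ℤ) * q - α.num) + α.num * ((q : ℤ) ^ l' - 1) := by ring
  constructor
  · rintro ⟨-, -, h⟩
    have := h q hq (dvd_pow_self q (Nat.succ_ne_zero l'))
    push_cast at this
    rw [hid] at this
    exact (dvd_add_right (Dvd.dvd.mul_left dvd_rfl _)).mp this
  · intro h
    refine ⟨h0, by rwa [hcast], ?_⟩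
    intro p hp hpdvd
    have hpq : p = q := (Nat.prime_dvd_prime_iff_eq hp hq).mp (hp.dvd_of_dvd_pow hpdvd)
    subst hpq
    push_cast
    rw [hid]
    exact dvd_add (Dvd.dvd.mul_left dvd_rfl _) h

theorem stmt_5 (q : ℕ) (hq : q.Prime) (k l m : ℕ) (hk : 2 ≤ k) (hl : 2 ≤ l)
    (hm : 2 ≤ m) (hgcd : Nat.gcd (l - 1) (k - 1) = m - 1) (α : ℚ)
    (h0 : α ≠ 0) (hm' : α ≠ (q : ℚ) ^ m) (hl' : α ≠ (q : ℚ) ^ l) (hk' : α ≠ (q : ℚ) ^ k) :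
    (QKS (q ^ l) α ∧ QKS (q ^ k) α) ↔ QKS (q ^ m) α := by
  rw [qks_pow_iff q hq l (by omega) α h0 hl', qks_pow_iff q hq k (by omega) α h0 hk',
    qks_pow_iff q hq m (by omega) α h0 hm']
  constructor
  · rintro ⟨h1, h2⟩
    have := gcd_key (q : ℤ) α.num _ (l - 1) (k - 1) h1 h2
    rwa [hgcd] at this
  · intro h
    have hdvd : ∀ j : ℕ, (m - 1) ∣ j →
        ((α.den : ℤ) * q - α.num) ∣ α.num * ((q : ℤ) ^ j - 1) := by
      rintro j ⟨t, rfl⟩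
      refine h.trans (mul_dvd_mul_left _ ?_)
      rw [pow_mul]
      simpa using sub_dvd_pow_sub_pow ((q : ℤ) ^ (m - 1)) 1 t
    exact ⟨hdvd _ (hgcd ▸ Nat.gcd_dvd_left _ _), hdvd _ (hgcd ▸ Nat.gcd_dvd_right _ _)⟩
end

section
/- A rational number α belongs to ℚ-KS(q^t) for every prime number q and every integer t ≥ 2 if and only if α = 1. Equivalently, the intersection over all primes q and all integers t ≥ 2 of the sets ℚ-KS(q^t) equals {1}. -/
theorem stmt_6 (α : ℚ) :
    (∀ q t : ℕ, q.Prime → 2 ≤ t → QKS (q ^ t) α) ↔ α = 1 := by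
  constructor
  · intro h
    set a : ℤ := α.num with ha
    set b : ℤ := (α.den : ℤ) with hb
    have hb1 : 1 ≤ b := by
      rw [hb]; exact_mod_cast Nat.one_le_iff_ne_zero.mpr α.den_nz
    have ha0 : a ≠ 0 := by
      intro h0
      exact (Rat.num_ne_zero.mpr (fun h1 => ((h 2 2 Nat.prime_two le_rfl).1 h1))) h0
    -- key divisibility: for every prime q, (b*q - a) ∣ a*(a-b)
    have key : ∀ q : ℕ, q.Prime → (b * q - a) ∣ a * (a - b) := by
      intro q hq
      have h2 := (h q 2 hq le_rfl).2.2 q hq (dvd_pow_self q two_ne_zero)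
      have hd1 : (b * q - a) ∣ a * ((q : ℤ) - 1) := by
        have : (b : ℤ) * (q ^ 2 : ℕ) - a = q * (b * q - a) + a * ((q : ℤ) - 1) := by
          push_cast; ring
        have h3 := h2
        rw [this] at h3
        exact (dvd_add_right (dvd_mul_left _ _)).mp h3
      have : b * (a * ((q : ℤ) - 1)) = a * (b * q - a) + a * (a - b) := by ring
      have hd2 : (b * q - a) ∣ b * (a * ((q : ℤ) - 1)) := hd1.mul_left b
      rw [this] at hd2
      exact (dvd_add_right (dvd_mul_left _ _)).mp hd2
    -- choose a large prime
    obtain ⟨q, hq_ge, hq⟩ := Nat.exists_infinite_primes (a.natAbs + (a * (a - b)).natAbs + 1)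
    have hdvd := key q hq
    have hab : a = b := by
      by_contra hne
      have hne0 : a * (a - b) ≠ 0 := mul_ne_zero ha0 (sub_ne_zero.mpr hne)
      have hle : b * q - a ≤ |a * (a - b)| := by
        apply Int.le_of_dvd (abs_pos.mpr hne0)
        exact (dvd_abs _ _).mpr hdvd
      have h1 : (a.natAbs : ℤ) + ((a * (a - b)).natAbs : ℤ) + 1 ≤ (q : ℤ) := by
        exact_mod_cast hq_ge
      have h2 : (q : ℤ) ≤ b * q := le_mul_of_one_le_left (by positivity) hb1
      have h3 : a ≤ (a.natAbs : ℤ) := Int.le_natAbs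
      have h4 : |a * (a - b)| = ((a * (a - b)).natAbs : ℤ) := (Int.abs_eq_natAbs _)
      omega
    -- a = b with coprimality gives α = 1
    have hden : (α.den : ℚ) ≠ 0 := by exact_mod_cast α.den_nz
    have : α = (α.num : ℚ) / (α.den : ℚ) := (Rat.num_div_den α).symm
    rw [this, ← ha, hab, hb]
    push_cast
    exact div_self hden
  · intro h q t hq ht
    subst h
    refine ⟨one_ne_zero, ?_, ?_⟩
    · intro h1
      have : ((q ^ t : ℕ) : ℚ) = 1 := h1.symm
      have hqt : q ^ t = 1 := by exact_mod_cast this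
      have : 2 ≤ q := hq.two_le
      have : 4 ≤ q ^ t := by calc 4 = 2 ^ 2 := rfl
                                 _ ≤ q ^ t := Nat.pow_le_pow_left ‹2 ≤ q› 2 |>.trans
                                      (Nat.pow_le_pow_right (le_trans one_le_two ‹2 ≤ q›) ht)
      omega
    · intro p hp hpdvd
      have hpq : p = q := by
        have := hp.dvd_of_dvd_pow hpdvd
        exact (Nat.prime_dvd_prime_iff_eq hp hq).mp this
      subst hpq
      simp only [Rat.den_ofNat, Rat.num_ofNat, Nat.cast_one, one_mul]
      have : ((p : ℤ) - 1) ∣ ((p : ℤ) ^ t - 1 ^ t) := sub_dvd_pow_sub_pow _ _ _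
      simpa using this
end

section
/- Let q be a prime number and l ≥ 2 an integer. A rational number α belongs to ℚ-KS(qˡ) if and only if α ≠ 0, α ≠ qˡ, and there exist a positive integer d dividing qˡ − q and a nonzero integer s such that α = q + d/s. -/
theorem stmt_7 (q : ℕ) (hq : q.Prime) (l : ℕ) (hl : 2 ≤ l) (α : ℚ) :
    QKS (q ^ l) α ↔
      α ≠ 0 ∧ α ≠ (q : ℚ) ^ l ∧
        ∃ d : ℤ, 0 < d ∧ d ∣ ((q : ℤ) ^ l - q) ∧
          ∃ s : ℤ, s ≠ 0 ∧ α = (q : ℚ) + (d : ℚ) / (s : ℚ) := by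
  have hden : (α.den : ℤ) ≠ 0 := by exact_mod_cast α.den_nz
  have hdenQ : (α.den : ℚ) ≠ 0 := by exact_mod_cast α.den_nz
  have hq2 : 2 ≤ q := hq.two_le
  have hqlt : (q : ℤ) < (q : ℤ) ^ l := by
    have h1 : q ^ 1 < q ^ l := Nat.pow_lt_pow_right (by omega) (by omega)
    have : q < q ^ l := by simpa using h1
    exact_mod_cast this
  have hα' : α * (α.den : ℚ) = (α.num : ℚ) := Rat.mul_den_eq_num α
  set t : ℤ := (α.den : ℤ) * q - α.num with ht
  constructor
  · rintro ⟨h0, hN, hdiv⟩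
    have hdv := hdiv q hq (dvd_pow_self q (by omega))
    push_cast at hdv
    refine ⟨h0, by push_cast at hN; exact hN, ?_⟩
    have key : t ∣ (α.den : ℤ) * ((q : ℤ) ^ l - q) := by
      have h1 : (α.den : ℤ) * ((q : ℤ) ^ l - q) =
          ((α.den : ℤ) * (q : ℤ) ^ l - α.num) - t := by rw [ht]; ring
      rw [h1]; exact dvd_sub hdv dvd_rfl
    have hcop : IsCoprime t (α.den : ℤ) := by
      have h2 : IsCoprime (α.num) ((α.den : ℤ)) := by
        rw [Int.isCoprime_iff_gcd_eq_one]
        exact α.reduced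
      have h4 := h2.neg_left.add_mul_left_left (q : ℤ)
      have h5 : -α.num + (α.den : ℤ) * q = t := by rw [ht]; ring
      rwa [h5] at h4
    have hdvd : t ∣ ((q : ℤ) ^ l - q) := hcop.dvd_of_dvd_mul_left key
    have ht0 : t ≠ 0 := by
      intro h
      have hz : (α.den : ℤ) * q - α.num = 0 := by rw [← ht]; exact h
      rw [hz, zero_dvd_iff, sub_eq_zero] at hdv
      have h5 : (α.den : ℤ) * (q : ℤ) ^ l = (α.den : ℤ) * q := by omega
      have := mul_left_cancel₀ hden h5
      omega
    obtain ⟨k, hk⟩ := hdvd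
    have hk0 : k ≠ 0 := by
      intro h; rw [h, mul_zero] at hk; omega
    have hkQ : (k : ℚ) ≠ 0 := by exact_mod_cast hk0
    refine ⟨(q : ℤ) ^ l - q, by omega, dvd_rfl, -k * α.den, ?_, ?_⟩
    · simp [hk0, hden]
    · have hkc : (q : ℚ) ^ l - q = (((α.den : ℚ) * q - α.num) * k) := by
        have := hk
        rw [ht] at this
        exact_mod_cast this
      push_cast
      field_simp
      linear_combination hkc + (k : ℚ) * hα'
  · rintro ⟨h0, hN, d, hd0, hdd, s, hs, heq⟩
    refine ⟨h0, by push_cast; exact hN, ?_⟩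
    intro p hp hpq
    have hpq' : p = q := (Nat.prime_dvd_prime_iff_eq hp hq).mp (hp.dvd_of_dvd_pow hpq)
    rw [hpq']
    push_cast
    have hsQ : (s : ℚ) ≠ 0 := by exact_mod_cast hs
    have h2 : α * s = ((q : ℚ) * s + d) := by
      rw [heq]; field_simp
    have h3 : α.num * s = (q * s + d) * (α.den : ℤ) := by
      have h4 : (α.num : ℚ) * s = ((q : ℚ) * s + d) * α.den := by
        rw [← hα']; linear_combination (α.den : ℚ) * h2
      exact_mod_cast h4
    have hkey : d * (α.den : ℤ) = t * (-s) := by rw [ht]; linear_combination -h3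
    have hdvd1 : t ∣ d * (α.den : ℤ) := ⟨-s, hkey⟩
    have hdvd2 : d * (α.den : ℤ) ∣ ((q : ℤ) ^ l - q) * α.den :=
      mul_dvd_mul_right hdd _
    have hdvd3 : t ∣ (α.den : ℤ) * ((q : ℤ) ^ l - q) := by
      rw [mul_comm]; exact hdvd1.trans hdvd2
    have h6 : (α.den : ℤ) * (q : ℤ) ^ l - α.num = (α.den : ℤ) * ((q : ℤ) ^ l - q) + t := by
      rw [ht]; ring
    rw [h6]
    exact dvd_add hdvd3 dvd_rfl
end

section
/- Let q be a prime number and l ≥ 2 an integer. An integer β belongs to ℤ-KS(qˡ) if and only if β ≠ 0, β ≠ qˡ, and there exists a positive integer d dividing qˡ − q such that β = q + d or β = q − d. -/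
/-- `β` is an integer `N`-Korselt base: `β ≠ 0`, `β ≠ N`, and for every prime `p`
dividing `N`, `p - β` divides `N - β`. -/
def ZKS (N : ℕ) (β : ℤ) : Prop :=
  β ≠ 0 ∧ β ≠ (N : ℤ) ∧
    ∀ p : ℕ, p.Prime → p ∣ N → ((p : ℤ) - β) ∣ ((N : ℤ) - β)

theorem stmt_8 (q : ℕ) (hq : q.Prime) (l : ℕ) (hl : 2 ≤ l) (β : ℤ) :
    ZKS (q ^ l) β ↔
      β ≠ 0 ∧ β ≠ (q : ℤ) ^ l ∧
        ∃ d : ℤ, 0 < d ∧ d ∣ ((q : ℤ) ^ l - q) ∧ (β = q + d ∨ β = q - d) := by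
  have hqlt : (q : ℤ) < (q : ℤ) ^ l := by
    have h2 : (2 : ℤ) ≤ (q : ℤ) := by exact_mod_cast hq.two_le
    calc (q : ℤ) = (q : ℤ) ^ 1 := (pow_one _).symm
    _ < (q : ℤ) ^ l := by
      apply pow_lt_pow_right₀ (by linarith) (by omega)
  constructor
  · rintro ⟨h0, hN, h⟩
    refine ⟨h0, by exact_mod_cast hN, ?_⟩
    have hd : ((q : ℤ) - β) ∣ ((q : ℤ) ^ l - β) := by
      have := h q hq (dvd_pow_self q (by omega))
      simpa using this
    have hd' : ((q : ℤ) - β) ∣ ((q : ℤ) ^ l - q) := by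
      have : (q : ℤ) ^ l - q = ((q : ℤ) ^ l - β) - ((q : ℤ) - β) := by ring
      rw [this]; exact dvd_sub hd dvd_rfl
    have hne : β ≠ (q : ℤ) := by
      intro hEq
      rw [hEq, sub_self] at hd'
      have := zero_dvd_iff.mp hd'
      omega
    rcases lt_or_gt_of_ne hne with hlt | hgt
    · exact ⟨(q : ℤ) - β, by omega, hd', Or.inr (by ring)⟩
    · exact ⟨β - (q : ℤ), by omega, by simpa using hd'.neg_left,
        Or.inl (by ring)⟩
  · rintro ⟨h0, hN, d, hdpos, hdvd, hβ⟩
    refine ⟨h0, by exact_mod_cast hN, ?_⟩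
    intro p hp hpdvd
    have hpq : p = q := by
      have := hp.dvd_of_dvd_pow hpdvd
      exact (Nat.prime_dvd_prime_iff_eq hp hq).mp this
    subst hpq
    push_cast
    have hqd : ((p : ℤ) - β) ∣ ((p : ℤ) ^ l - p) := by
      rcases hβ with h | h <;> rw [h]
      · have : (p : ℤ) - (p + d) = -d := by ring
        rw [this]; simpa using hdvd.neg_left
      · simpa using hdvd
    have : (p : ℤ) ^ l - β = ((p : ℤ) ^ l - p) + ((p : ℤ) - β) := by ring
    rw [this]
    exact dvd_add hqd dvd_rfl
end

section
/- Let q be a prime number, l ≥ 2 an integer, β an integer with β ≠ 0 and β ≠ qˡ, and s ≥ 2 an integer with gcd(s, β − q) = 1. Then β ∈ ℤ-KS(qˡ) if and only if the rational number α = q + (β − q)/s belongs to ℚ-KS(qˡ). -/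
theorem stmt_9 (q : ℕ) (hq : q.Prime) (l : ℕ) (hl : 2 ≤ l) (β : ℤ)
    (hβ0 : β ≠ 0) (hβN : β ≠ (q : ℤ) ^ l) (s : ℤ) (hs : 2 ≤ s)
    (hcop : Int.gcd s (β - q) = 1) :
    ZKS (q ^ l) β ↔ QKS (q ^ l) ((q : ℚ) + ((β : ℚ) - q) / (s : ℚ)) := by
  have hs0 : (0:ℤ) < s := by omega
  have hsQ : (s:ℚ) ≠ 0 := by exact_mod_cast hs0.ne'
  set n : ℤ := (q:ℤ) * s + (β - (q:ℤ)) with hn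
  have hcop' : IsCoprime (s : ℤ) (β - q) := Int.isCoprime_iff_gcd_eq_one.mpr hcop
  have hcn : IsCoprime n (s:ℤ) := by
    have := hcop'.symm.add_mul_left_left (q:ℤ)
    have h2 : β - (q:ℤ) + s * q = n := by rw [hn]; ring
    rwa [h2] at this
  have hcopn : Nat.Coprime n.natAbs s.natAbs :=
    Int.isCoprime_iff_gcd_eq_one.mp hcn
  set α : ℚ := (q : ℚ) + ((β : ℚ) - q) / (s : ℚ) with hα
  have heq : α = (n:ℚ)/(s:ℚ) := by
    rw [hα, hn]; push_cast; field_simp; try ring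
  have hnum : α.num = n := by rw [heq]; exact Rat.num_div_eq_of_coprime hs0 hcopn
  have hden : (α.den : ℤ) = s := by rw [heq]; exact Rat.den_div_eq_of_coprime hs0 hcopn
  have hqdvd : q ∣ q ^ l := dvd_pow_self q (by omega)
  have hpow : ((q:ℤ)) ∣ (q:ℤ)^l := dvd_pow_self _ (by omega)
  constructor
  · rintro ⟨-, -, hZ⟩
    refine ⟨?_, ?_, ?_⟩
    · intro h
      rw [h] at hden
      simp [Rat.den_ofNat] at hden
      omega
    · intro h
      rw [h] at hden
      simp [Rat.den_natCast] at hden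
      omega
    · intro p hp hpd
      have hpq : p = q := (Nat.prime_dvd_prime_iff_eq hp hq).mp (hp.dvd_of_dvd_pow hpd)
      subst hpq
      rw [hnum, hden]
      have h1 := hZ p hq hqdvd
      push_cast at h1 ⊢
      have h2 : ((p:ℤ) - β) ∣ ((p:ℤ)^l - p) := by
        have := h1.sub (dvd_refl ((p:ℤ) - β))
        have h3 : (p:ℤ)^l - β - ((p:ℤ) - β) = (p:ℤ)^l - p := by ring
        rwa [h3] at this
      have h4 : s * (p:ℤ)^l - n = s * ((p:ℤ)^l - p) + ((p:ℤ) - β) := by rw [hn]; ring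
      have h5 : s * (p:ℤ) - n = (p:ℤ) - β := by rw [hn]; ring
      rw [h4, h5]
      exact (h2.mul_left s).add (dvd_refl _)
  · rintro ⟨-, -, hQ⟩
    refine ⟨hβ0, ?_, ?_⟩
    · push_cast; exact hβN
    · intro p hp hpd
      have hpq : p = q := (Nat.prime_dvd_prime_iff_eq hp hq).mp (hp.dvd_of_dvd_pow hpd)
      subst hpq
      have h1 := hQ p hq hqdvd
      rw [hnum, hden] at h1
      push_cast at h1 ⊢
      have h4 : s * ((p:ℤ)^l) - n = s * ((p:ℤ)^l - p) + ((p:ℤ) - β) := by rw [hn]; ring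
      have h5 : s * (p:ℤ) - n = (p:ℤ) - β := by rw [hn]; ring
      rw [h4, h5] at h1
      have h2 : ((p:ℤ) - β) ∣ s * ((p:ℤ)^l - p) := by
        have := h1.sub (dvd_refl ((p:ℤ) - β))
        simpa using this
      have hc3 : IsCoprime ((p:ℤ) - β) s := by
        have := hcop'.symm.neg_left
        have he : -(β - (p:ℤ)) = (p:ℤ) - β := by ring
        rwa [he] at this
      have h3 : ((p:ℤ) - β) ∣ ((p:ℤ)^l - p) := hc3.dvd_of_dvd_mul_left h2
      have : (p:ℤ)^l - β = ((p:ℤ)^l - p) + ((p:ℤ) - β) := by ring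
      rw [this]
      exact h3.add (dvd_refl _)
end

section
/- Let q be a prime number, l ≥ 2 an integer, and let α ∈ ℚ-KS(qˡ) be a rational number with α ∉ {0, 1, −1} and gcd(α.num, q) = 1. Writing α₁ = α.num and α₂ = α.den, one has q ≤ α + |α·α₁^{l−2} − α₂^{l−2}| (an inequality of rational numbers). -/
theorem stmt_10 (q : ℕ) (hq : q.Prime) (l : ℕ) (hl : 2 ≤ l) (α : ℚ)
    (hα : QKS (q ^ l) α) (h0 : α ≠ 0) (h1 : α ≠ 1) (hm1 : α ≠ -1)
    (hcop : Int.gcd α.num (q : ℤ) = 1) :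
    (q : ℚ) ≤ α + |α * (α.num : ℚ) ^ (l - 2) - (α.den : ℚ) ^ (l - 2)| := by
  obtain ⟨k, rfl⟩ : ∃ k, l = k + 2 := ⟨l - 2, by omega⟩
  set a : ℤ := α.num with ha
  set b : ℤ := (α.den : ℤ) with hb
  have hb0 : 0 < b := by rw [hb]; exact_mod_cast α.pos
  -- Korselt divisibility
  have hdvd : (b * q - a) ∣ (b * (q : ℤ) ^ (k + 2) - a) := by
    have h := hα.2.2 q hq (dvd_pow_self q (by omega))
    push_cast at h
    exact h
  -- coprimalities
  have hcopab : IsCoprime a b := by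
    rw [Int.isCoprime_iff_gcd_eq_one]
    simpa [Int.gcd, hb] using α.reduced
  have hcopaq : IsCoprime a (q : ℤ) := by
    rw [Int.isCoprime_iff_gcd_eq_one]; exact hcop
  have hcopma : IsCoprime (b * q - a) a := by
    have h : IsCoprime (b * (q : ℤ)) a := (hcopab.mul_right hcopaq).symm
    have h2 := h.add_mul_left_left (-1)
    have : b * (q : ℤ) + a * (-1) = b * q - a := by ring
    rwa [this] at h2
  -- m divides a * X
  have h1' : (b * q - a) ∣ (b * q) ^ (k + 2) - a ^ (k + 2) :=
    sub_dvd_pow_sub_pow _ _ _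
  have h2' : (b * q - a) ∣ a * (a ^ (k + 1) - b ^ (k + 1)) := by
    have h3 := dvd_sub (hdvd.mul_left (b ^ (k + 1))) h1'
    have heq : b ^ (k + 1) * (b * (q : ℤ) ^ (k + 2) - a) -
        ((b * q) ^ (k + 2) - a ^ (k + 2)) = a * (a ^ (k + 1) - b ^ (k + 1)) := by
      ring
    rwa [heq] at h3
  have hmX : (b * q - a) ∣ (a ^ (k + 1) - b ^ (k + 1)) :=
    hcopma.dvd_of_dvd_mul_left h2'
  -- X ≠ 0
  have hX : a ^ (k + 1) - b ^ (k + 1) ≠ 0 := by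
    intro h
    have he : a ^ (k + 1) = b ^ (k + 1) := by linarith
    have hnat : a.natAbs ^ (k + 1) = α.den ^ (k + 1) := by
      have := congrArg Int.natAbs he
      simpa [Int.natAbs_pow, hb] using this
    have hd : a.natAbs = α.den := Nat.pow_left_injective (by omega) hnat
    have hc : Nat.Coprime α.den α.den := by
      have := α.reduced; rwa [hd] at this
    have hden1 : α.den = 1 := by simpa [Nat.Coprime, Nat.gcd_self] using hc
    have hna : a.natAbs = 1 := by omega
    have hα' : α = (a : ℚ) := by
      conv_lhs => rw [← Rat.num_div_den α]
      rw [hden1]; simp [ha]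
    rcases Int.natAbs_eq_iff.mp hna with h' | h'
    · exact h1 (by rw [hα', h']; norm_num)
    · exact hm1 (by rw [hα', h']; norm_num)
  -- the integer inequality
  have key : b * q ≤ a + |a ^ (k + 1) - b ^ (k + 1)| := by
    rcases le_or_gt (b * q) a with h | h
    · have := abs_nonneg (a ^ (k + 1) - b ^ (k + 1)); linarith
    · have hmpos : 0 < b * q - a := by linarith
      have hle : b * q - a ≤ |a ^ (k + 1) - b ^ (k + 1)| :=
        Int.le_of_dvd (abs_pos.mpr hX) ((dvd_abs _ _).mpr hmX)
      linarith
  -- back to ℚ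
  set B : ℚ := (α.den : ℚ) with hBdef
  have hB0 : (0 : ℚ) < B := by rw [hBdef]; exact_mod_cast α.pos
  have hmul : α * B = (a : ℚ) := by
    rw [hBdef, ha]; exact_mod_cast Rat.mul_den_eq_num α
  have hBa : α * (a : ℚ) ^ k - B ^ k =
      ((a : ℚ) ^ (k + 1) - B ^ (k + 1)) / B := by
    rw [eq_div_iff hB0.ne']
    linear_combination (a : ℚ) ^ k * hmul
  have hsimp : (k + 2 - 2) = k := by omega
  rw [hsimp, hBa, abs_div, abs_of_pos hB0]
  set Y : ℚ := |(a : ℚ) ^ (k + 1) - B ^ (k + 1)| with hY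
  have h2 : α + Y / B = (α * B + Y) / B := by field_simp
  rw [h2, le_div_iff₀ hB0, hmul]
  have keyQ : B * q ≤ (a : ℚ) + Y := by
    rw [hY, hBdef]
    simp only [hb, ha] at key
    exact_mod_cast key
  linarith [keyQ, mul_comm (q : ℚ) B]
end

section
/- For every nonzero rational number α there exist a prime number p and an integer k ≥ 2 such that gcd(α.num, p) = 1 and α ∈ ℚ-KS(p^k). -/
theorem stmt_11 (α : ℚ) (hα : α ≠ 0) :
    ∃ p k : ℕ, p.Prime ∧ 2 ≤ k ∧ Int.gcd α.num (p : ℤ) = 1 ∧ QKS (p ^ k) α := by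
  set n : ℤ := α.num with hn
  set d : ℤ := (α.den : ℤ) with hd
  have hn0 : n ≠ 0 := Rat.num_ne_zero.mpr hα
  have hnApos : 0 < n.natAbs := Int.natAbs_pos.mpr hn0
  obtain ⟨p, hple, hp⟩ := Nat.exists_infinite_primes (n.natAbs + 1)
  have hnp : n.natAbs < p := hple
  have hpndvd : ¬ p ∣ n.natAbs := fun h => absurd (Nat.le_of_dvd hnApos h) (not_le.mpr hnp)
  have hd1 : 1 ≤ d := by rw [hd]; exact_mod_cast Nat.one_le_iff_ne_zero.mpr α.den_nz
  have hnltp : n < (p : ℤ) := lt_of_le_of_lt (Int.le_natAbs) (by exact_mod_cast hnp)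
  have hppos : (0:ℤ) < p := by exact_mod_cast hp.pos
  have hmpos : 0 < d * p - n := by nlinarith
  set m : ℤ := d * p - n with hm
  set M : ℕ := m.toNat with hMdef
  have hMZ : (M : ℤ) = m := Int.toNat_of_nonneg hmpos.le
  have hMpos : 0 < M := by omega
  have hcop : Nat.Coprime p M := by
    rw [hp.coprime_iff_not_dvd]
    intro hdvd
    have h1 : (p : ℤ) ∣ m := by rw [← hMZ]; exact_mod_cast hdvd
    have h2 : (p : ℤ) ∣ n := by
      have : n = d * p - m := by ring
      rw [this]; exact dvd_sub ⟨d, by ring⟩ h1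
    have := Int.natAbs_dvd_natAbs.mpr h2
    simpa using hpndvd (by simpa using this)
  set φ : ℕ := M.totient with hφ
  have hφpos : 0 < φ := Nat.totient_pos.mpr hMpos
  refine ⟨p, φ + 1, hp, by omega, ?_, ?_⟩
  · -- gcd
    have : Nat.Coprime n.natAbs p := (hp.coprime_iff_not_dvd.mpr hpndvd).symm
    simpa [Int.gcd] using this
  have heuler : (M : ℤ) ∣ (p : ℤ) ^ φ - 1 := by
    have h1 : p ^ φ ≡ 1 [MOD M] := Nat.ModEq.pow_totient hcop
    have h2 : M ∣ p ^ φ - 1 := (Nat.modEq_iff_dvd' (Nat.one_le_iff_ne_zero.mpr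
      (pow_ne_zero _ hp.pos.ne'))).mp h1.symm
    have h3 : (1:ℕ) ≤ p ^ φ := Nat.one_le_iff_ne_zero.mpr (pow_ne_zero _ hp.pos.ne')
    have := Int.natCast_dvd_natCast.mpr h2
    rw [Nat.cast_sub h3] at this
    push_cast at this
    exact this
  have hkey : m ∣ d * (p : ℤ) ^ (φ + 1) - n := by
    have : d * (p : ℤ) ^ (φ + 1) - n = (p : ℤ) ^ φ * m + n * ((p : ℤ) ^ φ - 1) := by
      rw [hm]; ring
    rw [this]
    exact dvd_add (Dvd.intro_left _ rfl) (Dvd.dvd.mul_left (hMZ ▸ heuler) n)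
  refine ⟨hα, ?_, ?_⟩
  · intro h
    have hnum : n = ((p ^ (φ + 1) : ℕ) : ℤ) := by
      have := congrArg Rat.num h
      simpa [← hn] using this
    have : (p : ℤ) ≤ (p : ℤ) ^ (φ + 1) := by
      calc (p:ℤ) = (p:ℤ)^1 := (pow_one _).symm
      _ ≤ (p:ℤ)^(φ+1) := pow_le_pow_right₀ (by exact_mod_cast hp.one_lt.le) (by omega)
    have : n < ((p ^ (φ + 1) : ℕ) : ℤ) := by push_cast; omega
    omega
  · intro q hq hqd
    have hqp : q = p := (Nat.prime_dvd_prime_iff_eq hq hp).mp (hq.dvd_of_dvd_pow hqd)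
    subst hqp
    show (d * q - n) ∣ (d * ((q ^ (φ + 1) : ℕ) : ℤ) - n)
    push_cast
    exact hkey
end

section
/- For every nonzero rational number α, the set of natural numbers N such that N = p^k for some prime p and some integer k ≥ 2 with p not dividing α.num and α ∈ ℚ-KS(N) is infinite. -/
theorem stmt_12 (α : ℚ) (hα : α ≠ 0) :
    {N : ℕ | ∃ p k : ℕ, p.Prime ∧ 2 ≤ k ∧ ¬ ((p : ℤ) ∣ α.num) ∧ N = p ^ k ∧
      QKS N α}.Infinite := by
  have hnum : α.num ≠ 0 := Rat.num_ne_zero.mpr hα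
  obtain ⟨p, hple, hp⟩ := Nat.exists_infinite_primes (α.num.natAbs + 1)
  have hpnum : ¬ ((p : ℤ) ∣ α.num) := by
    intro h
    have h2 : p ∣ α.num.natAbs := Int.natCast_dvd.mp h
    have := Nat.le_of_dvd (Int.natAbs_pos.mpr hnum) h2
    omega
  have hd : 0 < (α.den : ℤ) := by exact_mod_cast α.pos
  have habs : (α.num.natAbs : ℤ) < p := by exact_mod_cast hple
  have hnum_lt : α.num < (p : ℤ) := lt_of_le_of_lt (le_abs_self _ |>.trans_eq (Int.abs_eq_natAbs _)) habs
  set m : ℤ := (α.den : ℤ) * p - α.num with hm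
  have hppos : (1 : ℤ) ≤ p := by exact_mod_cast hp.one_lt.le
  have hmpos : 0 < m := by
    have : (p : ℤ) ≤ (α.den : ℤ) * p := le_mul_of_one_le_left (by positivity) hd
    omega
  set M : ℕ := m.toNat with hM
  have hMm : (M : ℤ) = m := Int.toNat_of_nonneg hmpos.le
  have hMpos : 0 < M := by omega
  have hcop : Nat.Coprime p M := by
    rw [Nat.coprime_comm]
    apply Nat.Coprime.symm
    rw [Nat.Prime.coprime_iff_not_dvd hp]
    intro h
    have h' : (p : ℤ) ∣ m := hMm ▸ Int.natCast_dvd_natCast.mpr h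
    have h3 : (α.den : ℤ) * p - m = α.num := by rw [hm]; ring
    exact hpnum (h3 ▸ dvd_sub ⟨α.den, mul_comm _ _⟩ h')
  set φ := M.totient with hφ
  have hφpos : 0 < φ := Nat.totient_pos.mpr hMpos
  apply Set.infinite_of_injective_forall_mem
    (f := fun t : ℕ => p ^ (1 + (t + 1) * φ))
  · intro a b hab
    simp only at hab
    have := Nat.pow_right_injective hp.two_le hab
    have : (a + 1) * φ = (b + 1) * φ := by omega
    exact by
      have := Nat.eq_of_mul_eq_mul_right hφpos this
      omega
  · intro t
    set e := (t + 1) * φ with he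
    set k := 1 + e with hk
    have hk2 : 2 ≤ k := by
      have : 1 ≤ e := by
        have : 1 ≤ t + 1 := by omega
        calc 1 = 1 * 1 := by ring
        _ ≤ (t + 1) * φ := Nat.mul_le_mul this hφpos
      omega
    refine ⟨p, k, hp, hk2, hpnum, rfl, hα, ?_, ?_⟩
    · intro heq
      have h1 : α.num = ((p : ℤ)) ^ k := by
        have := congrArg Rat.num heq
        simpa using this
      exact hpnum (h1 ▸ dvd_pow_self (p : ℤ) (by omega))
    · intro q hq hqdvd
      have hqp : q = p := (Nat.prime_dvd_prime_iff_eq hq hp).mp (hq.dvd_of_dvd_pow hqdvd)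
      rw [hqp] at hqdvd ⊢
      -- key: m ∣ (p:ℤ)^e - 1
      have heuler : p ^ φ ≡ 1 [MOD M] := Nat.ModEq.pow_totient hcop
      have heuler' : p ^ e ≡ 1 [MOD M] := by
        have := heuler.pow (t + 1)
        rwa [← pow_mul, one_pow, mul_comm φ (t + 1)] at this
      have hdvdnat : M ∣ p ^ e - 1 :=
        (Nat.modEq_iff_dvd' (Nat.one_le_pow _ _ hp.pos)).mp heuler'.symm
      have hdvd1 : m ∣ (p : ℤ) ^ e - 1 := by
        have : (M : ℤ) ∣ ((p ^ e - 1 : ℕ) : ℤ) := Int.natCast_dvd_natCast.mpr hdvdnat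
        rw [hMm] at this
        have hpe : 1 ≤ p ^ e := Nat.one_le_pow _ _ hp.pos
        rwa [Nat.cast_sub hpe, Nat.cast_pow, Nat.cast_one] at this
      have key : (α.den : ℤ) * (p ^ k : ℕ) - α.num
          = (p : ℤ) ^ e * m + α.num * ((p : ℤ) ^ e - 1) := by
        push_cast
        rw [hm, hk]
        ring
      rw [key]
      exact dvd_add (Dvd.intro_left _ rfl) (hdvd1.mul_left _)
end

section
/- Let q be a prime number and l ≥ 2 an integer. For every positive integer s dividing l − 1, the rational number 1/q^{s−1} belongs to ℚ-KS(qˡ). -/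
theorem stmt_14 (q : ℕ) (hq : q.Prime) (l : ℕ) (hl : 2 ≤ l) (s : ℕ)
    (hs : 1 ≤ s) (hdvd : s ∣ (l - 1)) :
    QKS (q ^ l) (1 / (q : ℚ) ^ (s - 1)) := by
  have hq0 : 0 < q := hq.pos
  have hq1 : 1 < q := hq.one_lt
  have hα : (1 / (q : ℚ) ^ (s - 1)) = ((q ^ (s - 1) : ℕ) : ℚ)⁻¹ := by
    push_cast
    rw [one_div]
  have hpos : 0 < q ^ (s - 1) := Nat.pow_pos hq0
  have hnum : (1 / (q : ℚ) ^ (s - 1)).num = 1 := by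
    rw [hα]; exact Rat.inv_natCast_num_of_pos hpos
  have hden : (1 / (q : ℚ) ^ (s - 1)).den = q ^ (s - 1) := by
    rw [hα]; exact Rat.inv_natCast_den_of_pos hpos
  refine ⟨?_, ?_, ?_⟩
  · intro h
    rw [h] at hnum
    simp at hnum
  · intro h
    have h1 : (1 / (q : ℚ) ^ (s - 1)) ≤ 1 := by
      rw [div_le_one (by positivity)]
      exact one_le_pow₀ (by exact_mod_cast hq1.le)
    have h2 : (1 : ℚ) < (q : ℚ) ^ l := by
      exact_mod_cast Nat.one_lt_pow (by omega) hq1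
    rw [h] at h1
    push_cast at h1
    linarith
  · intro p hp hpdvd
    have hpq : p = q := (Nat.prime_dvd_prime_iff_eq hp hq).mp (hp.dvd_of_dvd_pow hpdvd)
    rw [hnum, hden, hpq]
    have key : ((q : ℤ) ^ s - 1) ∣ ((q : ℤ) ^ (l + s - 1) - 1) := by
      have hsd : s ∣ (l + s - 1) := by
        obtain ⟨k, hk⟩ := hdvd
        exact ⟨k + 1, by rw [Nat.mul_add, Nat.mul_one, ← hk]; omega⟩
      obtain ⟨t, ht⟩ := hsd
      rw [ht, pow_mul]
      simpa using sub_dvd_pow_sub_pow ((q : ℤ) ^ s) 1 t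
    have e1 : ((q ^ (s - 1) : ℕ) : ℤ) * (q : ℤ) - 1 = (q : ℤ) ^ s - 1 := by
      push_cast
      rw [← pow_succ]
      congr 2
      omega
    have e2 : ((q ^ (s - 1) : ℕ) : ℤ) * ((q ^ l : ℕ) : ℤ) - 1 = (q : ℤ) ^ (l + s - 1) - 1 := by
      push_cast
      rw [← pow_add]
      congr 2
      omega
    rw [e1, e2]
    exact key
end

section
/- Let q be a prime number and l ≥ 2 an integer. For every positive integer s dividing l − 1 such that (l − 1)/s is even, the rational number −1/q^{s−1} belongs to ℚ-KS(qˡ). -/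
theorem stmt_15 (q : ℕ) (hq : q.Prime) (l : ℕ) (hl : 2 ≤ l) (s : ℕ)
    (hs : 1 ≤ s) (hdvd : s ∣ (l - 1)) (heven : Even ((l - 1) / s)) :
    QKS (q ^ l) (-1 / (q : ℚ) ^ (s - 1)) := by
  have hq0 : 0 < q := hq.pos
  have hb0 : (0:ℤ) < (q:ℤ)^(s-1) := by positivity
  have hcop : Nat.Coprime (Int.natAbs (-1)) (((q:ℤ)^(s-1)).natAbs) :=
    Nat.coprime_one_left _
  have hα : (-1 / (q:ℚ)^(s-1)) = ((-1:ℤ):ℚ) / (((q:ℤ)^(s-1)) : ℚ) := by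
    push_cast; ring
  have hnum : (-1 / (q:ℚ)^(s-1)).num = -1 := by
    rw [hα]; exact_mod_cast Rat.num_div_eq_of_coprime hb0 hcop
  have hden : (((-1 / (q:ℚ)^(s-1)).den : ℤ)) = (q:ℤ)^(s-1) := by
    rw [hα]; exact_mod_cast Rat.den_div_eq_of_coprime hb0 hcop
  refine ⟨?_, ?_, ?_⟩
  · intro h; rw [h] at hnum; simp at hnum
  · intro h; rw [h] at hnum; simp at hnum
    have : (0:ℤ) ≤ (q:ℤ)^l := by positivity
    omega
  · intro p hp hpd
    have hpq : p = q := (Nat.prime_dvd_prime_iff_eq hp hq).mp (hp.dvd_of_dvd_pow hpd)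
    rw [hpq]
    rw [hnum, hden]
    obtain ⟨k, hk⟩ := hdvd
    have hkeven : Even k := by
      rwa [hk, Nat.mul_div_cancel_left _ (by omega)] at heven
    have hexp : s - 1 + l = s * (k + 1) := by
      have h2 : s * (k + 1) = s * k + s := by ring
      omega
    have h1 : (q:ℤ)^(s-1) * (q:ℤ) = (q:ℤ)^s := by
      rw [← pow_succ]; congr 1; omega
    have h2 : (q:ℤ)^(s-1) * (q:ℤ)^l = ((q:ℤ)^s)^(k+1) := by
      rw [← pow_mul, ← pow_add, hexp]
    push_cast
    rw [sub_neg_eq_add, sub_neg_eq_add, h1, h2]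
    have := Odd.add_dvd_pow_add_pow ((q:ℤ)^s) 1 (n := k+1) (by simpa using hkeven.add_one)
    simpa using this
end

section
/- Let p and q be two distinct prime numbers and let l ≥ 1 be an integer. Then 1/p ∈ ℚ-KS(qˡ) if and only if 1/q ∈ ℚ-KS(pˡ). -/
lemma key_step (a b : ℤ) (k : ℕ) (hco : IsCoprime (a * b - 1) a) :
    (a * b - 1) ∣ (a * b ^ (k + 1) - 1) ↔ (a * b - 1) ∣ (a ^ k - 1) := by
  have h1 : (a * b - 1) ∣ (a * b) ^ (k + 1) - 1 := by
    simpa using sub_dvd_pow_sub_pow (a * b) 1 (k + 1)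
  have hid : a ^ k * (a * b ^ (k + 1) - 1) = ((a * b) ^ (k + 1) - 1) - (a ^ k - 1) := by
    ring
  constructor
  · intro h
    have h2 : (a * b - 1) ∣ a ^ k * (a * b ^ (k + 1) - 1) := h.mul_left _
    rw [hid] at h2
    exact (dvd_sub_right h1).mp h2
  · intro h
    have h2 : (a * b - 1) ∣ a ^ k * (a * b ^ (k + 1) - 1) := by
      rw [hid]; exact dvd_sub h1 h
    exact (hco.pow_right).dvd_of_dvd_mul_left h2

lemma key_symm (a b : ℤ) (k : ℕ) (hca : IsCoprime (a * b - 1) a)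
    (hcb : IsCoprime (a * b - 1) b) :
    (a * b - 1) ∣ (a * b ^ (k + 1) - 1) ↔ (a * b - 1) ∣ (b * a ^ (k + 1) - 1) := by
  rw [key_step a b k hca]
  have hba : b * a - 1 = a * b - 1 := by ring
  rw [show (a * b - 1) ∣ (b * a ^ (k + 1) - 1) ↔ (b * a - 1) ∣ (b * a ^ (k + 1) - 1) by
    rw [hba], key_step b a k (by rwa [hba]), hba]
  -- now : (a*b-1) ∣ a^k - 1 ↔ (a*b-1) ∣ b^k - 1
  have h1 : (a * b - 1) ∣ (a * b) ^ k - 1 := by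
    simpa using sub_dvd_pow_sub_pow (a * b) 1 k
  have hid : b ^ k * (a ^ k - 1) = ((a * b) ^ k - 1) - (b ^ k - 1) := by ring
  have hid' : a ^ k * (b ^ k - 1) = ((a * b) ^ k - 1) - (a ^ k - 1) := by ring
  constructor
  · intro h
    have h2 : (a * b - 1) ∣ b ^ k * (a ^ k - 1) := h.mul_left _
    rw [hid] at h2
    exact (dvd_sub_right h1).mp h2
  · intro h
    have h2 : (a * b - 1) ∣ a ^ k * (b ^ k - 1) := h.mul_left _
    rw [hid'] at h2
    exact (dvd_sub_right h1).mp h2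

lemma qks_half (p q : ℕ) (hp : p.Prime) (hq : q.Prime) (l : ℕ) (hl : 1 ≤ l)
    (h : ((p : ℤ) * q - 1) ∣ ((p : ℤ) * (q : ℤ) ^ l - 1)) :
    QKS (p ^ l) (1 / (q : ℚ)) := by
  have hq0 : (0 : ℚ) < q := by exact_mod_cast hq.pos
  have hden : (1 / (q : ℚ)).den = q := by
    rw [one_div]; exact Rat.inv_natCast_den_of_pos hq.pos
  have hnum : (1 / (q : ℚ)).num = 1 := by
    rw [one_div]; exact Rat.inv_natCast_num_of_pos hq.pos
  refine ⟨by positivity, ?_, ?_⟩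
  · have h1 : (1 : ℚ) / q < 1 := by
      rw [div_lt_one hq0]; exact_mod_cast hq.one_lt
    have h2 : (1 : ℚ) ≤ ((p ^ l : ℕ) : ℚ) := by
      exact_mod_cast Nat.one_le_pow l p hp.pos
    exact ne_of_lt (lt_of_lt_of_le h1 h2)
  · intro r hr hrd
    have hrp : r = p := by
      have := (Nat.prime_dvd_prime_iff_eq hr hp).mp (hr.dvd_of_dvd_pow hrd)
      exact this
    rw [hden, hnum, hrp]
    -- goal: (q*p - 1) ∣ (q * p^l - 1)
    obtain ⟨k, rfl⟩ : ∃ k, l = k + 1 := ⟨l - 1, (Nat.succ_pred_eq_of_pos hl).symm⟩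
    have hca : IsCoprime ((q : ℤ) * p - 1) (q : ℤ) := ⟨-1, p, by ring⟩
    have hcb : IsCoprime ((q : ℤ) * p - 1) (p : ℤ) := ⟨-1, q, by ring⟩
    have h' : ((q : ℤ) * p - 1) ∣ ((p : ℤ) * (q : ℤ) ^ (k + 1) - 1) := by
      have : (q : ℤ) * p - 1 = (p : ℤ) * q - 1 := by ring
      rw [this]; exact h
    have := (key_symm (q : ℤ) (p : ℤ) k hca hcb).mpr (by
      have heq : (q : ℤ) * p - 1 = (p : ℤ) * q - 1 := by ring
      simpa [heq] using h)
    push_cast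
    convert this using 2

theorem stmt_16 (p q : ℕ) (hp : p.Prime) (hq : q.Prime) (hpq : p ≠ q)
    (l : ℕ) (hl : 1 ≤ l) :
    QKS (q ^ l) (1 / (p : ℚ)) ↔ QKS (p ^ l) (1 / (q : ℚ)) := by
  have hdp : (1 / (p : ℚ)).den = p := by
    rw [one_div]; exact Rat.inv_natCast_den_of_pos hp.pos
  have hnp : (1 / (p : ℚ)).num = 1 := by
    rw [one_div]; exact Rat.inv_natCast_num_of_pos hp.pos
  have hdq : (1 / (q : ℚ)).den = q := by
    rw [one_div]; exact Rat.inv_natCast_den_of_pos hq.pos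
  have hnq : (1 / (q : ℚ)).num = 1 := by
    rw [one_div]; exact Rat.inv_natCast_num_of_pos hq.pos
  constructor
  · intro ⟨_, _, hdvd⟩
    apply qks_half p q hp hq l hl
    have := hdvd q hq (dvd_pow_self q (by omega))
    rw [hdp, hnp] at this
    push_cast at this ⊢
    convert this using 2
  · intro ⟨_, _, hdvd⟩
    apply qks_half q p hq hp l hl
    have := hdvd p hp (dvd_pow_self p (by omega))
    rw [hdq, hnq] at this
    push_cast at this ⊢
    convert this using 2
end

section
/- Let p and q be two distinct prime numbers and let l ≥ 1 be an odd integer. Then −1/p ∈ ℚ-KS(qˡ) if and only if −1/q ∈ ℚ-KS(pˡ). -/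
lemma neg_one_div_num_den (p : ℕ) (hp : p.Prime) :
    (-1 / (p : ℚ)).num = -1 ∧ (-1 / (p : ℚ)).den = p := by
  have h : (-1 / (p : ℚ)) = Rat.mk' (-1) p (by exact_mod_cast hp.pos.ne') (by simp) := by
    rw [Rat.mk_eq_divInt, Rat.divInt_eq_div]
    push_cast; ring
  rw [h]; exact ⟨rfl, rfl⟩

lemma key_dvd (p q : ℤ) (k : ℕ) (hk : Even k)
    (hd : p * q + 1 ∣ p * q ^ (k + 1) + 1) :
    p * q + 1 ∣ q * p ^ (k + 1) + 1 := by
  set m := p * q + 1 with hm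
  -- m ∣ (p*q)^k - 1 since k is even
  have hC : m ∣ p ^ k * q ^ k - 1 := by
    have h1 : p * q - (-1) ∣ (p * q) ^ k - (-1) ^ k := sub_dvd_pow_sub_pow _ _ _
    rw [hk.neg_one_pow, mul_pow] at h1
    have : p * q - (-1) = m := by rw [hm]; ring
    rwa [this] at h1
  -- from hd deduce m ∣ q^k - 1
  have hA : m ∣ q ^ k - 1 := by
    have h2 : m ∣ q ^ k * m := Dvd.intro_left _ rfl
    have h3 : q ^ k - 1 = q ^ k * m - (p * q ^ (k + 1) + 1) := by rw [hm]; ring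
    rw [h3]; exact dvd_sub h2 hd
  -- hence m ∣ q^k * (p^k - 1)
  have hB : m ∣ q ^ k * (p ^ k - 1) := by
    have h4 : q ^ k * (p ^ k - 1) = (p ^ k * q ^ k - 1) - (q ^ k - 1) := by ring
    rw [h4]; exact dvd_sub hC hA
  -- m coprime to q
  have hco : IsCoprime m (q ^ k) := by
    refine IsCoprime.pow_right ⟨1, -p, ?_⟩
    rw [hm]; ring
  have hB' : m ∣ p ^ k - 1 := hco.dvd_of_dvd_mul_left hB
  have h5 : q * p ^ (k + 1) + 1 = p ^ k * m + (1 - p ^ k) := by rw [hm]; ring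
  rw [h5]
  exact dvd_add (Dvd.intro_left _ rfl) (by simpa using hB'.neg_right)

lemma QKS_dir (p q : ℕ) (hp : p.Prime) (hq : q.Prime)
    (l : ℕ) (hl : 1 ≤ l) (hodd : Odd l)
    (h : QKS (q ^ l) (-1 / (p : ℚ))) : QKS (p ^ l) (-1 / (q : ℚ)) := by
  obtain ⟨hnum_p, hden_p⟩ := neg_one_div_num_den p hp
  obtain ⟨hnum_q, hden_q⟩ := neg_one_div_num_den q hq
  obtain ⟨-, -, hdvd⟩ := h
  have hq0 : (q : ℚ) ≠ 0 := by exact_mod_cast hq.pos.ne'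
  refine ⟨div_ne_zero (by norm_num) hq0, ?_, ?_⟩
  · have hneg : -1 / (q : ℚ) < 0 := by
      apply div_neg_of_neg_of_pos (by norm_num)
      exact_mod_cast hq.pos
    have hpos : (0 : ℚ) < ((p ^ l : ℕ) : ℚ) := by
      exact_mod_cast pow_pos hp.pos l
    exact ne_of_lt (lt_trans hneg hpos)
  · intro r hr hrdvd
    have hrp : r = p := (Nat.prime_dvd_prime_iff_eq hr hp).mp (hr.dvd_of_dvd_pow hrdvd)
    subst hrp
    rw [hnum_q, hden_q]
    obtain ⟨k, hk⟩ : ∃ k, l = k + 1 := ⟨l - 1, by omega⟩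
    have hkeven : Even k := by
      rcases hodd with ⟨n, hn⟩
      exact ⟨n, by omega⟩
    subst hk
    have hkey := hdvd q hq (dvd_pow_self q (by omega))
    rw [hnum_p, hden_p] at hkey
    push_cast at hkey ⊢
    rw [sub_neg_eq_add, sub_neg_eq_add] at hkey ⊢
    -- hkey : r*q + 1 ∣ r*q^(k+1) + 1 ; goal : q*r + 1 ∣ q*r^(k+1) + 1
    have h2 := key_dvd (r : ℤ) (q : ℤ) k hkeven hkey
    rwa [mul_comm ((r:ℤ)) ((q:ℤ))] at h2

theorem stmt_17 (p q : ℕ) (hp : p.Prime) (hq : q.Prime) (hpq : p ≠ q)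
    (l : ℕ) (hl : 1 ≤ l) (hodd : Odd l) :
    QKS (q ^ l) (-1 / (p : ℚ)) ↔ QKS (p ^ l) (-1 / (q : ℚ)) := by
  exact ⟨QKS_dir p q hp hq l hl hodd, QKS_dir q p hq hp l hl hodd⟩
end

section
/- Let q be a prime number, l ≥ 2 an integer, and α ∈ ℚ-KS(qˡ); write α₂ = α.den. Then 0 < α < 1 if and only if there exists a positive integer d dividing qˡ − q such that α = q − d/α₂ and ⌊d/q⌋ + 1 ≤ α₂ ≤ ⌈d/(q−1)⌉ − 1 (here ⌊·⌋ and ⌈·⌉ denote floor and ceiling of the rational quotients). -/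
theorem stmt_18 (q : ℕ) (hq : q.Prime) (l : ℕ) (hl : 2 ≤ l) (α : ℚ)
    (hα : QKS (q ^ l) α) :
    (0 < α ∧ α < 1) ↔
      ∃ d : ℤ, 0 < d ∧ d ∣ ((q : ℤ) ^ l - q) ∧
        α = (q : ℚ) - (d : ℚ) / (α.den : ℚ) ∧
        ⌊(d : ℚ) / (q : ℚ)⌋ + 1 ≤ (α.den : ℤ) ∧
        (α.den : ℤ) ≤ ⌈(d : ℚ) / ((q : ℚ) - 1)⌉ - 1 := by
  obtain ⟨hα0, hαN, hdvd⟩ := hα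
  have hq2 : 2 ≤ q := hq.two_le
  have hmpos : 0 < (α.den : ℤ) := by exact_mod_cast α.pos
  have hmQ : (0 : ℚ) < (α.den : ℚ) := by exact_mod_cast α.pos
  have hqQ : (0 : ℚ) < (q : ℚ) := by exact_mod_cast (by omega : 0 < q)
  have hq1Q : (0 : ℚ) < (q : ℚ) - 1 := by
    have : (2 : ℚ) ≤ (q : ℚ) := by exact_mod_cast hq2
    linarith
  constructor
  · rintro ⟨h0, h1⟩
    have hn0 : 0 < α.num := Rat.num_pos.mpr h0
    have hnm : α.num < (α.den : ℤ) := by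
      have : (α.num : ℚ) < (α.den : ℚ) := by
        rw [← div_lt_one hmQ, Rat.num_div_den]; exact h1
      exact_mod_cast this
    refine ⟨(α.den : ℤ) * q - α.num, ?_, ?_, ?_, ?_, ?_⟩
    · have : (α.den : ℤ) ≤ (α.den : ℤ) * q :=
        le_mul_of_one_le_right hmpos.le (by exact_mod_cast hq.one_le)
      linarith
    · have hkey := hdvd q hq (dvd_pow_self q (by omega : l ≠ 0))
      have h2 : ((α.den : ℤ) * q - α.num) ∣ (α.den : ℤ) * ((q : ℤ) ^ l - q) := by
        have := dvd_sub hkey (dvd_refl ((α.den : ℤ) * q - α.num))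
        have heq : ((α.den : ℤ) * (q ^ l : ℕ) - α.num) - ((α.den : ℤ) * q - α.num)
            = (α.den : ℤ) * ((q : ℤ) ^ l - q) := by push_cast; ring
        rwa [heq] at this
      have hco : IsCoprime ((α.den : ℤ) * q - α.num) ((α.den : ℤ)) := by
        have h1 : IsCoprime (α.num) ((α.den : ℤ)) :=
          Int.isCoprime_iff_gcd_eq_one.mpr α.reduced
        have h2 := (h1.neg_left).add_mul_left_left (q : ℤ)
        have : -α.num + (α.den : ℤ) * q = (α.den : ℤ) * q - α.num := by ring
        rwa [this] at h2
      exact hco.dvd_of_dvd_mul_left h2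
    · have h := Rat.num_div_den α
      nth_rewrite 1 [← h]
      push_cast
      field_simp
      ring
    · rw [Int.add_one_le_iff, Int.floor_lt]
      rw [div_lt_iff₀ hqQ]
      push_cast
      have : (0 : ℚ) < (α.num : ℚ) := by exact_mod_cast hn0
      linarith
    · rw [le_sub_iff_add_le, Int.add_one_le_iff, Int.lt_ceil, lt_div_iff₀ hq1Q]
      push_cast
      have : (α.num : ℚ) < (α.den : ℚ) := by exact_mod_cast hnm
      linarith
  · rintro ⟨d, hd0, -, hαeq, hfl, hcl⟩
    have h0 : (d : ℚ) / (q : ℚ) < (α.den : ℚ) := by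
      have := Int.floor_lt.mp (by omega : ⌊(d : ℚ) / (q : ℚ)⌋ < (α.den : ℤ))
      exact_mod_cast this
    have h1 : ((α.den : ℤ) : ℚ) < (d : ℚ) / ((q : ℚ) - 1) := by
      exact Int.lt_ceil.mp (by omega : (α.den : ℤ) < ⌈(d : ℚ) / ((q : ℚ) - 1)⌉)
    have h0' : (d : ℚ) < (α.den : ℚ) * q := by
      rw [div_lt_iff₀ hqQ] at h0; linarith
    have h1' : (α.den : ℚ) * ((q : ℚ) - 1) < (d : ℚ) := by
      rw [lt_div_iff₀ hq1Q] at h1; push_cast at h1 ⊢; nlinarith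
    have hda : (d : ℚ) / (α.den : ℚ) < (q : ℚ) := by
      rw [div_lt_iff₀ hmQ]; linarith
    have hdb : (q : ℚ) - 1 < (d : ℚ) / (α.den : ℚ) := by
      rw [lt_div_iff₀ hmQ]; linarith
    constructor
    · rw [hαeq]; linarith
    · rw [hαeq]; linarith
end

section
/- Let q be a prime number and l ≥ 2 an integer. There exists a rational number α with −1 ≤ α < 1 and α ∈ ℚ-KS(qˡ) if and only if l ≠ 2. Equivalently, the set (ℚ ∩ [−1, 1))-KS(qˡ) is empty if and only if l = 2. -/
theorem stmt_19 (q : ℕ) (hq : q.Prime) (l : ℕ) (hl : 2 ≤ l) :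
    (∃ α : ℚ, -1 ≤ α ∧ α < 1 ∧ QKS (q ^ l) α) ↔ l ≠ 2 := by
  have hq2 : 2 ≤ q := hq.two_le
  constructor
  · rintro ⟨α, h1, h2, hne, -, hdvd⟩ rfl
    rw [Rat.le_iff] at h1
    rw [Rat.lt_iff] at h2
    simp at h1 h2
    set n := α.num with hn
    set d := (α.den : ℤ) with hd
    have hdpos : 0 < d := Int.natCast_pos.mpr α.pos
    have key := hdvd q hq (dvd_pow_self q (by norm_num))
    push_cast at key
    have hD : (d * q - n) ∣ n * ((q:ℤ) - 1) := by
      have h3 : (d * q - n) ∣ (d * (q:ℤ)^2 - n) - (q:ℤ) * (d * q - n) :=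
        dvd_sub key (dvd_mul_left _ _)
      have heq : (d * (q:ℤ)^2 - n) - (q:ℤ) * (d * q - n) = n * ((q:ℤ) - 1) := by ring
      rwa [heq] at h3
    have hq1 : (2:ℤ) ≤ q := by exact_mod_cast hq2
    have hDpos : d * ((q:ℤ) - 1) < d * q - n := by nlinarith
    have habs : |n * ((q:ℤ) - 1)| ≤ d * ((q:ℤ) - 1) := by
      rw [abs_mul, abs_of_nonneg (by linarith : (0:ℤ) ≤ (q:ℤ) - 1)]
      have : |n| ≤ d := abs_le.mpr ⟨by linarith, by linarith⟩
      nlinarith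
    have hnz : n * ((q:ℤ) - 1) = 0 := by
      by_contra h
      have := Int.le_of_dvd (abs_pos.mpr h) ((dvd_abs _ _).mpr hD)
      linarith
    have : n = 0 := by
      rcases mul_eq_zero.mp hnz with h | h
      · exact h
      · exfalso; linarith
    exact hne (Rat.num_eq_zero.mp this)
  · intro hl2
    obtain ⟨k, rfl⟩ : ∃ k, l = k + 3 := ⟨l - 3, by omega⟩
    set m : ℕ := q ^ (k + 1) with hm
    have hm1 : 1 < m := Nat.one_lt_pow (by omega) (by omega)
    have hlt1 : ((m:ℚ))⁻¹ < 1 := by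
      rw [inv_lt_one_iff₀]; right; exact_mod_cast hm1
    have hge : (1:ℚ) ≤ ((q ^ (k+3) : ℕ) : ℚ) := by
      exact_mod_cast Nat.one_le_pow _ _ (by omega)
    refine ⟨((m : ℚ))⁻¹, ?_, hlt1, ?_, ne_of_lt (hlt1.trans_le hge), ?_⟩
    · have : (0:ℚ) ≤ ((m:ℚ))⁻¹ := by positivity
      linarith
    · exact (by positivity : (0:ℚ) < ((m:ℚ))⁻¹).ne'
    · intro p hp hpd
      have hpq : p = q :=
        (Nat.prime_dvd_prime_iff_eq hp hq).mp (hp.dvd_of_dvd_pow hpd)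
      rw [hpq, Rat.inv_natCast_num_of_pos (by omega),
        Rat.inv_natCast_den_of_pos (by omega)]
      push_cast [hm]
      refine ⟨(q:ℤ)^(k+2) + 1, ?_⟩
      ring
end
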